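/- Fix a finite-dimensional subspace V^h ⊂ H^1_⋄(Ω). If a sequence Γ_n = (Q_n, f_n, g_n) ⊂ H_ad converges weakly to Γ = (Q, f, g) in L²_sym(Ω) × L²(Ω) × L²(∂Ω) (with Q_n ⇀ Q weakly* in L^∞_sym), then the discrete Galerkin solutions U^h_{Γ_n} ∈ V^h, defined by ∫_Ω Q_n ∇U^h_{Γ_n}·∇φ^h = (f_n, φ^h) + ⟨g_n, γφ^h⟩ for all φ^h ∈ V^h, converge to U^h_Γ in the H^1(Ω)-norm. -/
import Mathlib


open InnerProductSpace Filter Topology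

/-- for a fixed finite-dimensional FE subspace `Vh ⊂ H¹_⋄(Ω)`, if
`Γ_n = (Q_n,f_n,g_n) ⊂ H_ad` converges weakly (weakly* in the `Q`-component) to
`Γ = (Q,f,g)`, then the discrete Galerkin solutions `U^h_{Γ_n} ∈ Vh` converge
to `U^h_Γ` in the `H¹(Ω)`-norm. -/
theorem stmt6
    (Hd G L2 L2b MQ : Type*)
    [NormedAddCommGroup Hd] [InnerProductSpace ℝ Hd] [CompleteSpace Hd]
    [NormedAddCommGroup G] [InnerProductSpace ℝ G]
    [NormedAddCommGroup L2] [InnerProductSpace ℝ L2]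
    [NormedAddCommGroup L2b] [InnerProductSpace ℝ L2b]
    [NormedAddCommGroup MQ] [NormedSpace ℝ MQ]
    (grad : Hd →L[ℝ] G) (ι : Hd →L[ℝ] L2) (γ : Hd →L[ℝ] L2b)
    (QF : MQ →L[ℝ] G →L[ℝ] G →L[ℝ] ℝ)
    (q qbar CΩ : ℝ) (hq : 0 < q) (hqq : q ≤ qbar) (hCΩ : 0 < CΩ)
    (Qad : Set MQ)
    (hell : ∀ Q ∈ Qad, ∀ v : G,
      q * ‖v‖ ^ 2 ≤ QF Q v v ∧ QF Q v v ≤ qbar * ‖v‖ ^ 2)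
    (hPF : ∀ φ : Hd, ‖φ‖ ^ 2 ≤ (1 + CΩ) / CΩ * ‖grad φ‖ ^ 2)
    (Vh : Submodule ℝ Hd) (hfin : FiniteDimensional ℝ Vh)
    (Qn : ℕ → MQ) (fn : ℕ → L2) (gn : ℕ → L2b)
    (Q : MQ) (f : L2) (g : L2b)
    (hQn : ∀ n, Qn n ∈ Qad) (hQ : Q ∈ Qad)
    -- weak* convergence `Q_n ⇀* Q` tested against the relevant quadratic forms
    (hQw : ∀ v w : G, Tendsto (fun n => QF (Qn n) v w) atTop (𝓝 (QF Q v w)))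
    -- weak convergence `f_n ⇀ f` in `L²(Ω)` and `g_n ⇀ g` in `L²(∂Ω)`
    (hfw : ∀ ψ : L2, Tendsto (fun n => ⟪fn n, ψ⟫_ℝ) atTop (𝓝 ⟪f, ψ⟫_ℝ))
    (hgw : ∀ ψ : L2b, Tendsto (fun n => ⟪gn n, ψ⟫_ℝ) atTop (𝓝 ⟪g, ψ⟫_ℝ))
    (Un : ℕ → Hd) (U0 : Hd)
    (hUn : ∀ n, Un n ∈ Vh ∧ ∀ v ∈ Vh,
      QF (Qn n) (grad (Un n)) (grad v) = ⟪fn n, ι v⟫_ℝ + ⟪gn n, γ v⟫_ℝ)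
    (hU0 : U0 ∈ Vh ∧ ∀ v ∈ Vh,
      QF Q (grad U0) (grad v) = ⟪f, ι v⟫_ℝ + ⟪g, γ v⟫_ℝ) :
    Tendsto (fun n => ‖Un n - U0‖) atTop (𝓝 0) := by

  haveI := hfin
  have hc0 : 0 < CΩ / (1 + CΩ) := div_pos hCΩ (by linarith)
  set qc : ℝ := q * (CΩ / (1 + CΩ)) with hqcdef
  have hqc0 : 0 < qc := mul_pos hq hc0
  -- the error functionals
  set T : ℕ → Hd →L[ℝ] ℝ := fun n =>
    ((innerSL ℝ (fn n - f)).comp ι) + ((innerSL ℝ (gn n - g)).comp γ)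
      + ((QF Q (grad U0) - QF (Qn n) (grad U0)).comp grad) with hTdef
  have hTapp : ∀ n (x : Hd), T n x =
      (⟪fn n, ι x⟫_ℝ - ⟪f, ι x⟫_ℝ) + (⟪gn n, γ x⟫_ℝ - ⟪g, γ x⟫_ℝ)
        + (QF Q (grad U0) (grad x) - QF (Qn n) (grad U0) (grad x)) := by
    intro n x
    simp [hTdef, inner_sub_left]
  have hTpt : ∀ x : Hd, Tendsto (fun n => T n x) atTop (𝓝 0) := by
    intro x
    have h1 : Tendsto (fun n => ⟪fn n, ι x⟫_ℝ - ⟪f, ι x⟫_ℝ) atTop (𝓝 0) := by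
      simpa using (hfw (ι x)).sub_const ⟪f, ι x⟫_ℝ
    have h2 : Tendsto (fun n => ⟪gn n, γ x⟫_ℝ - ⟪g, γ x⟫_ℝ) atTop (𝓝 0) := by
      simpa using (hgw (γ x)).sub_const ⟪g, γ x⟫_ℝ
    have h3 : Tendsto (fun n =>
        QF Q (grad U0) (grad x) - QF (Qn n) (grad U0) (grad x)) atTop (𝓝 0) := by
      simpa using (tendsto_const_nhds (x := QF Q (grad U0) (grad x))).sub
        (hQw (grad U0) (grad x))
    have := (h1.add h2).add h3
    simp only [add_zero] at this
    refine this.congr fun n => ?_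
    rw [hTapp]
  -- coercivity inequality
  have hkey : ∀ n, qc * ‖Un n - U0‖ ^ 2 ≤ T n (Un n - U0) := by
    intro n
    obtain ⟨hUnm, hUne⟩ := hUn n
    obtain ⟨hU0m, hU0e⟩ := hU0
    have hmem : Un n - U0 ∈ Vh := sub_mem hUnm hU0m
    have hco := (hell (Qn n) (hQn n) (grad (Un n - U0))).1
    have heq : QF (Qn n) (grad (Un n - U0)) (grad (Un n - U0)) = T n (Un n - U0) := by
      have e1 := hUne (Un n - U0) hmem
      have e2 := hU0e (Un n - U0) hmem
      rw [hTapp]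
      rw [map_sub grad, map_sub (QF (Qn n))]
      simp only [ContinuousLinearMap.sub_apply]
      rw [map_sub grad] at e1 e2
      rw [e1, e2]
      ring
    have hpf := hPF (Un n - U0)
    have hgn : CΩ / (1 + CΩ) * ‖Un n - U0‖ ^ 2 ≤ ‖grad (Un n - U0)‖ ^ 2 := by
      have h4 : CΩ / (1 + CΩ) * ‖Un n - U0‖ ^ 2 ≤
          CΩ / (1 + CΩ) * ((1 + CΩ) / CΩ * ‖grad (Un n - U0)‖ ^ 2) := by
        exact mul_le_mul_of_nonneg_left hpf hc0.le
      calc CΩ / (1 + CΩ) * ‖Un n - U0‖ ^ 2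
          ≤ CΩ / (1 + CΩ) * ((1 + CΩ) / CΩ * ‖grad (Un n - U0)‖ ^ 2) := h4
        _ = ‖grad (Un n - U0)‖ ^ 2 := by
            have hne1 : CΩ ≠ 0 := ne_of_gt hCΩ
            have hne2 : (1 + CΩ) ≠ 0 := by positivity
            have h5 : CΩ / (1 + CΩ) * ((1 + CΩ) / CΩ) = 1 := by
              field_simp
            rw [← mul_assoc, h5, one_mul]
    calc qc * ‖Un n - U0‖ ^ 2 = q * (CΩ / (1 + CΩ) * ‖Un n - U0‖ ^ 2) := by
          rw [hqcdef]; ring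
      _ ≤ q * ‖grad (Un n - U0)‖ ^ 2 := by
          exact mul_le_mul_of_nonneg_left hgn hq.le
      _ ≤ QF (Qn n) (grad (Un n - U0)) (grad (Un n - U0)) := hco
      _ = T n (Un n - U0) := heq
  -- finite-dimensional bound via a basis
  let b := Module.finBasis ℝ ↥Vh
  let K : Fin (Module.finrank ℝ ↥Vh) → ℝ := fun i =>
    ‖LinearMap.toContinuousLinearMap (b.coord i)‖
  have hK0 : ∀ i, 0 ≤ K i := fun i =>
    norm_nonneg (LinearMap.toContinuousLinearMap (b.coord i))
  set s : ℕ → ℝ := fun n => ∑ i, K i * |T n ↑(b i)| with hsdef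
  have hs0 : ∀ n, 0 ≤ s n := by
    intro n
    exact Finset.sum_nonneg fun i _ => mul_nonneg (hK0 i) (abs_nonneg _)
  have hstend : Tendsto s atTop (𝓝 0) := by
    have : Tendsto (fun n => ∑ i, K i * |T n ↑(b i)|) atTop (𝓝 (∑ i : Fin (Module.finrank ℝ ↥Vh), (0 : ℝ))) := by
      refine tendsto_finset_sum _ fun i _ => ?_
      have h5 : Tendsto (fun n => |T n ↑(b i)|) atTop (𝓝 0) := by
        simpa using (hTpt ↑(b i)).abs
      simpa using h5.const_mul (K i)
    simpa using this
  have hbound : ∀ n (v : ↥Vh), |T n ↑v| ≤ s n * ‖v‖ := by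
    intro n v
    have hv : (↑v : Hd) = ↑(∑ i, b.repr v i • b i) := by
      rw [Module.Basis.sum_repr]
    have : T n ↑v = ∑ i, b.repr v i * T n ↑(b i) := by
      rw [hv]
      push_cast
      rw [map_sum]
      congr 1
      ext i
      rw [map_smul]
      simp
    rw [this]
    calc |∑ i, b.repr v i * T n ↑(b i)|
        ≤ ∑ i, |b.repr v i * T n ↑(b i)| := Finset.abs_sum_le_sum_abs _ _
      _ ≤ ∑ i, (K i * ‖v‖) * |T n ↑(b i)| := by
          refine Finset.sum_le_sum fun i _ => ?_
          rw [abs_mul]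
          refine mul_le_mul_of_nonneg_right ?_ (abs_nonneg _)
          have : |b.repr v i| = ‖LinearMap.toContinuousLinearMap (b.coord i) v‖ := by
            simp [Module.Basis.coord_apply]
          rw [this]
          exact (LinearMap.toContinuousLinearMap (b.coord i)).le_opNorm v
      _ = s n * ‖v‖ := by
          rw [hsdef, Finset.sum_mul]
          congr 1; ext i; ring
  -- conclude
  have hfinal : ∀ n, ‖Un n - U0‖ ≤ s n / qc := by
    intro n
    obtain ⟨hUnm, _⟩ := hUn n
    obtain ⟨hU0m, _⟩ := hU0
    set v : ↥Vh := ⟨Un n - U0, sub_mem hUnm hU0m⟩ with hvdef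
    have hvn : ‖Un n - U0‖ = ‖v‖ := rfl
    have h6 : qc * ‖v‖ ^ 2 ≤ s n * ‖v‖ := by
      calc qc * ‖v‖ ^ 2 = qc * ‖Un n - U0‖ ^ 2 := by rw [hvn]
        _ ≤ T n (Un n - U0) := hkey n
        _ ≤ |T n ↑v| := le_abs_self _
        _ ≤ s n * ‖v‖ := hbound n v
    rcases eq_or_lt_of_le (norm_nonneg v) with h7 | h7
    · rw [hvn, ← h7]
      positivity
    · rw [hvn, le_div_iff₀ hqc0]
      have h6' : (qc * ‖v‖) * ‖v‖ ≤ s n * ‖v‖ := by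
        calc (qc * ‖v‖) * ‖v‖ = qc * ‖v‖ ^ 2 := by ring
          _ ≤ s n * ‖v‖ := h6
      have h8 := le_of_mul_le_mul_right h6' h7
      rw [mul_comm]
      exact h8
  have := squeeze_zero (fun n => norm_nonneg _) hfinal
    (by simpa using hstend.div_const qc)
  exact this
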